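/- arXiv:2210.09816 — 3 statements merged into one kernel-verified Lean document; each statement's English description precedes it below -/
import Mathlib

section
/- For a, b > 0 and ξ ∈ ℝ: (-iξ)·∫₀^∞ e^{isξ}·a·E₁(bs) ds = a·Ln(1 - iξ/b), where E₁(x) = ∫ₓ^∞ e^{-z}/z dz is the exponential integral and Ln denotes the principal branch of the complex logarithm. -/
open Complex MeasureTheory

open Set Filter Topology

/-- The exponential integral `E₁(x) = ∫ₓ^∞ e^{-z}/z dz`. -/
noncomputable def expInt (x : ℝ) : ℝ := ∫ z in Set.Ioi x, Real.exp (-z) / z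

noncomputable def wker (b c : ℝ) (s : ℝ) : ℂ :=
  (1 - Complex.exp (Complex.I * s * c)) * (Real.exp (-(b * s)) / s : ℝ)

noncomputable def Phi (b ξ : ℝ) (u : ℝ) : ℂ := ∫ s in Ioi (0:ℝ), wker b (u*ξ) s


lemma meas_aux : Measurable (fun z : ℝ => Real.exp (-z) / z) :=
  (Real.measurable_exp.comp measurable_neg).div measurable_id

lemma expInt_integrand_integrable {x : ℝ} (hx : 0 < x) :
    IntegrableOn (fun z => Real.exp (-z) / z) (Ioi x) := by
  have h1 : IntegrableOn (fun z : ℝ => Real.exp (-z) / x) (Ioi x) := by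
    have := (exp_neg_integrableOn_Ioi x (b := 1) one_pos).div_const x
    simpa [IntegrableOn] using this
  refine h1.mono' meas_aux.aestronglyMeasurable.restrict ?_
  filter_upwards [ae_restrict_mem measurableSet_Ioi] with z hz
  have hz0 : 0 < z := hx.trans hz
  rw [Real.norm_eq_abs, abs_div, abs_of_pos (Real.exp_pos _), abs_of_pos hz0]
  exact div_le_div_of_nonneg_left (Real.exp_pos _).le hx (le_of_lt hz)

lemma expInt_nonneg {x : ℝ} (hx : 0 < x) : 0 ≤ expInt x := by
  refine setIntegral_nonneg measurableSet_Ioi fun z hz => ?_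
  exact div_nonneg (Real.exp_pos _).le (hx.trans hz).le

lemma expInt_le {x : ℝ} (hx : 0 < x) : expInt x ≤ Real.exp (-x) / x := by
  rw [expInt, show Real.exp (-x) / x = ∫ z in Ioi x, Real.exp (-z) / x from ?_]
  · refine setIntegral_mono_on (expInt_integrand_integrable hx) ?_ measurableSet_Ioi ?_
    · have := (exp_neg_integrableOn_Ioi x (b := 1) one_pos).div_const x
      simpa [IntegrableOn] using this
    · intro z hz
      exact div_le_div_of_nonneg_left (Real.exp_pos _).le hx (le_of_lt hz)
  · rw [integral_div]
    have := integral_exp_neg_Ioi x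
    rw [this]

lemma key_split {c x : ℝ} (hc : 0 < c) (hcx : c ≤ x) :
    expInt c = (∫ t in c..x, Real.exp (-t) / t) + expInt x := by
  have hx : 0 < x := hc.trans_le hcx
  rw [intervalIntegral.integral_of_le hcx, expInt, expInt,
    ← setIntegral_union (Ioc_disjoint_Ioi le_rfl) measurableSet_Ioi
      ((expInt_integrand_integrable hc).mono_set Ioc_subset_Ioi_self)
      (expInt_integrand_integrable hx), Ioc_union_Ioi_eq_Ioi hcx]

lemma expInt_eq {c x : ℝ} (hc : 0 < c) (hx : 0 < x) :
    expInt x = expInt c - ∫ t in c..x, Real.exp (-t) / t := by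
  rcases le_total c x with h | h
  · have := key_split hc h; linarith
  · have := key_split hx h
    rw [intervalIntegral.integral_symm]; linarith

lemma hasDerivAt_expInt {x : ℝ} (hx : 0 < x) :
    HasDerivAt expInt (-(Real.exp (-x) / x)) x := by
  have h1 : HasDerivAt (fun y => expInt x - ∫ t in x..y, Real.exp (-t) / t)
      (-(Real.exp (-x) / x)) x := by
    have := (intervalIntegral.integral_hasDerivAt_right
      (a := x) (b := x) (f := fun z => Real.exp (-z) / z)
      (by rw [intervalIntegrable_iff]; simp)
      (meas_aux.stronglyMeasurable.stronglyMeasurableAtFilter)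
      (((Real.continuous_exp.comp continuous_neg).continuousAt).div continuousAt_id hx.ne'))
    simpa [Pi.sub_def] using (hasDerivAt_const x (expInt x)).sub this
  refine h1.congr_of_eventuallyEq ?_
  filter_upwards [Ioi_mem_nhds hx] with y hy
  exact expInt_eq hx hy

lemma exp_le_rpow {z : ℝ} (hz : 0 < z) : Real.exp (-z) ≤ z ^ (-(1/2) : ℝ) := by
  rcases le_total z 1 with h | h
  · calc Real.exp (-z) ≤ 1 := Real.exp_le_one_iff.mpr (by linarith)
    _ ≤ z ^ (-(1/2) : ℝ) :=
      Real.one_le_rpow_of_pos_of_le_one_of_nonpos hz h (by norm_num)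
  · have h1 : z ^ ((1:ℝ)/2) ≤ z := by
      calc z ^ ((1:ℝ)/2) ≤ z ^ (1:ℝ) := Real.rpow_le_rpow_of_exponent_le h (by norm_num)
      _ = z := Real.rpow_one z
    have h2 : z < Real.exp z := by
      have := Real.add_one_le_exp z; linarith
    rw [Real.exp_neg, show (-(1/2) : ℝ) = -(1/2) from rfl, Real.rpow_neg hz.le]
    exact inv_anti₀ (Real.rpow_pos_of_pos hz _) (h1.trans h2.le)

lemma integrand_le_rpow {z : ℝ} (hz : 0 < z) :
    Real.exp (-z) / z ≤ z ^ (-(3/2) : ℝ) := by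
  have h1 : z ^ (-(3/2) : ℝ) = z ^ (-(1/2) : ℝ) / z := by
    have h2 : z ^ (-(1/2) : ℝ) / z = z ^ (-(1/2) : ℝ) * z ^ (-1 : ℝ) := by
      rw [Real.rpow_neg_one]; ring
    rw [h2, ← Real.rpow_add hz]; norm_num
  rw [h1]
  gcongr
  exact exp_le_rpow hz

lemma expInt_le_rpow {x : ℝ} (hx : 0 < x) : expInt x ≤ 2 * x ^ (-(1/2) : ℝ) := by
  have h2 : expInt x ≤ ∫ z in Ioi x, z ^ (-(3/2) : ℝ) := by
    refine setIntegral_mono_on (expInt_integrand_integrable hx)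
      (integrableOn_Ioi_rpow_of_lt (by norm_num) hx) measurableSet_Ioi ?_
    exact fun z hz => integrand_le_rpow (hx.trans hz)
  rw [integral_Ioi_rpow_of_lt (by norm_num) hx] at h2
  refine h2.trans_eq ?_
  norm_num
  rw [div_eq_mul_inv]
  ring_nf

lemma norm_one_sub_exp_le (θ : ℝ) : ‖1 - Complex.exp (θ * I)‖ ≤ |θ| := by
  have hz : Complex.exp (θ * I) - 1 = ((Real.cos θ - 1 : ℝ) : ℂ) + (Real.sin θ : ℝ) * I := by
    rw [Complex.exp_mul_I, ← Complex.ofReal_cos, ← Complex.ofReal_sin]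
    push_cast
    ring
  have h1 : ‖1 - Complex.exp (θ * I)‖ ^ 2 = (Real.cos θ - 1)^2 + (Real.sin θ)^2 := by
    rw [norm_sub_rev, hz, Complex.sq_norm, Complex.normSq_add_mul_I]
  have h3 : 2 - 2 * Real.cos θ ≤ θ ^ 2 := by
    have hc := Real.cos_sq (θ/2)
    rw [show 2*(θ/2) = θ by ring] at hc
    have hs := Real.sin_sq_add_cos_sq (θ/2)
    have hb := Real.sin_sq_le_sq (x := θ/2)
    nlinarith
  have h4 : ‖1 - Complex.exp (θ * I)‖ ^ 2 ≤ |θ|^2 := by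
    rw [h1, _root_.sq_abs]
    nlinarith [Real.sin_sq_add_cos_sq θ]
  nlinarith [norm_nonneg (1 - Complex.exp (θ * I)), abs_nonneg θ]

lemma integral_cexp_Ioi {c : ℂ} (hc : c.re < 0) :
    (∫ s in Ioi (0:ℝ), Complex.exp (c * s)) = -c⁻¹ := by
  have hnorm : ∀ s : ℝ, ‖Complex.exp (c * s)‖ = Real.exp (c.re * s) := by
    intro s; rw [Complex.norm_exp]; simp
  have hint : IntegrableOn (fun s : ℝ => Complex.exp (c * s)) (Ioi 0) := by
    have hb0 : (0:ℝ) < -c.re := by linarith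
    refine Integrable.mono' (exp_neg_integrableOn_Ioi 0 hb0) ?_ ?_
    · exact (Complex.continuous_exp.comp
        (continuous_const.mul Complex.continuous_ofReal)).aestronglyMeasurable
    · refine ae_of_all _ fun s => ?_
      rw [hnorm s]
      simp
  have hderiv : ∀ s ∈ Ici (0:ℝ), HasDerivAt (fun s : ℝ => c⁻¹ * Complex.exp (c * s))
      (Complex.exp (c * s)) s := by
    intro s _
    have h0 : HasDerivAt (fun s : ℝ => c * (s:ℂ)) c s := by
      simpa using ((hasDerivAt_id (s:ℂ)).const_mul c).comp_ofReal
    have := (h0.cexp).const_mul c⁻¹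
    have hc0 : c ≠ 0 := fun h => by simp [h] at hc
    convert this using 1
    · rfl
    field_simp
  have htend : Tendsto (fun s : ℝ => c⁻¹ * Complex.exp (c * s)) atTop (𝓝 0) := by
    rw [show (0:ℂ) = c⁻¹ * 0 by ring]
    refine Tendsto.const_mul _ ?_
    rw [tendsto_zero_iff_norm_tendsto_zero]
    simp_rw [hnorm]
    exact Real.tendsto_exp_atBot.comp (tendsto_id.const_mul_atTop_of_neg hc)
  have := integral_Ioi_of_hasDerivAt_of_tendsto' hderiv hint htend
  rw [this]; simp

lemma norm_cexp_I (s c : ℝ) : ‖Complex.exp (Complex.I * s * c)‖ = 1 := by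
  rw [Complex.norm_exp]
  simp

lemma norm_wker_le (b c : ℝ) {s : ℝ} (hs : 0 < s) :
    ‖wker b c s‖ ≤ |c| * Real.exp (-(b * s)) := by
  rw [wker, norm_mul]
  have h1 : ‖1 - Complex.exp (Complex.I * s * c)‖ ≤ |s * c| := by
    have := norm_one_sub_exp_le (s * c)
    rw [show ((s*c : ℝ):ℂ) * I = Complex.I * s * c by push_cast; ring] at this
    exact this
  have h2 : ‖((Real.exp (-(b * s)) / s : ℝ) : ℂ)‖ = Real.exp (-(b * s)) / s := by
    rw [Complex.norm_real, Real.norm_eq_abs, abs_of_pos (div_pos (Real.exp_pos _) hs)]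
  rw [h2]
  calc ‖1 - Complex.exp (Complex.I * s * c)‖ * (Real.exp (-(b*s)) / s)
      ≤ |s * c| * (Real.exp (-(b*s)) / s) := by
        have hpos : 0 ≤ Real.exp (-(b*s)) / s := div_nonneg (Real.exp_pos _).le hs.le
        exact mul_le_mul_of_nonneg_right h1 hpos
    _ = |c| * Real.exp (-(b*s)) := by
        rw [abs_mul, abs_of_pos hs]
        field_simp
  
lemma contOn_wker (b c : ℝ) : ContinuousOn (wker b c) (Ioi 0) := by
  refine ContinuousOn.mul ?_ ?_
  · exact (continuous_const.sub (Complex.continuous_exp.comp (by continuity))).continuousOn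
  · refine Complex.continuous_ofReal.comp_continuousOn ?_
    refine ContinuousOn.div ?_ continuousOn_id fun s hs => ne_of_gt hs
    exact (Real.continuous_exp.comp (by continuity)).continuousOn

lemma integrableOn_wker (b c : ℝ) (hb : 0 < b) : IntegrableOn (wker b c) (Ioi 0) := by
  refine Integrable.mono' ((exp_neg_integrableOn_Ioi 0 hb).const_mul |c|) ?_ ?_
  · exact (contOn_wker b c).aestronglyMeasurable measurableSet_Ioi
  · filter_upwards [ae_restrict_mem measurableSet_Ioi] with s hs
    simpa [neg_mul] using norm_wker_le b c hs

lemma hasDerivAt_Phi {b : ℝ} (hb : 0 < b) (ξ u : ℝ) :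
    HasDerivAt (Phi b ξ) (-(Complex.I*ξ) * ((b:ℂ) - Complex.I*u*ξ)⁻¹) u := by
  have key := hasDerivAt_integral_of_dominated_loc_of_deriv_le
    (μ := volume.restrict (Ioi (0:ℝ))) (x₀ := u)
    (F := fun x s => wker b (x*ξ) s)
    (F' := fun x s => -(Complex.I*ξ) * Complex.exp ((Complex.I*x*ξ - b) * s))
    (bound := fun s => |ξ| * Real.exp (-(b * s)))
    (s := Metric.ball u 1) (Metric.ball_mem_nhds u one_pos)
    (Eventually.of_forall fun x =>
      ((contOn_wker b (x*ξ)).aestronglyMeasurable measurableSet_Ioi))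
    (integrableOn_wker b (u*ξ) hb)
    (Continuous.aestronglyMeasurable (by continuity))
    ?_ ?_ ?_
  · have heq : (∫ s in Ioi (0:ℝ), -(Complex.I*ξ) * Complex.exp ((Complex.I*u*ξ - b) * s))
        = -(Complex.I*ξ) * ((b:ℂ) - Complex.I*u*ξ)⁻¹ := by
      rw [integral_const_mul, integral_cexp_Ioi (by simp [hb] : ((Complex.I*u*ξ - b):ℂ).re < 0)]
      rw [show -((Complex.I*↑u*↑ξ - ↑b)⁻¹) = ((b:ℂ) - Complex.I*u*ξ)⁻¹ by
        rw [← inv_neg]; ring_nf]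
    rw [heq] at key
    exact key.2
  · filter_upwards [ae_restrict_mem measurableSet_Ioi] with s hs
    intro x _
    have : ‖-(Complex.I*(ξ:ℂ)) * Complex.exp ((Complex.I*x*ξ - b) * s)‖
        = |ξ| * Real.exp (-(b*s)) := by
      rw [norm_mul, norm_neg, norm_mul,
        Complex.norm_I, Complex.norm_real, Real.norm_eq_abs, one_mul, Complex.norm_exp,
        show ((Complex.I*(x:ℂ)*ξ - b) * s).re = -(b*s) by
          simp [Complex.sub_re, Complex.mul_re, Complex.mul_im]]
    rw [this]
  · refine ((exp_neg_integrableOn_Ioi 0 hb).const_mul |ξ|).congr (ae_of_all _ fun s => ?_)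
    simp [neg_mul]
  · filter_upwards [ae_restrict_mem measurableSet_Ioi] with s hs
    intro x _
    have hs0 : (s:ℝ) ≠ 0 := ne_of_gt hs
    have h0 : HasDerivAt (fun x : ℝ => (Complex.I*s*ξ) * (x:ℂ)) (Complex.I*s*ξ) x := by
      simpa using ((hasDerivAt_id (x:ℂ)).const_mul (Complex.I*(s:ℂ)*(ξ:ℂ))).comp_ofReal
    have h1 := ((h0.cexp.const_sub 1).mul_const ((Real.exp (-(b * s)) / s : ℝ) : ℂ))
    have hfun : (fun x : ℝ => wker b (x*ξ) s)
        = fun y : ℝ => (1 - Complex.exp (Complex.I*s*ξ*y)) * ((Real.exp (-(b * s)) / s : ℝ) : ℂ) := by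
      funext y
      rw [wker]
      push_cast
      ring_nf
    rw [hfun]
    convert h1 using 1
    · rfl
    have hsC : ((s:ℂ)) ≠ 0 := Complex.ofReal_ne_zero.mpr hs0
    push_cast [Complex.ofReal_exp]
    rw [show (Complex.I*(x:ℂ)*ξ - b)*s = Complex.I*s*ξ*x + -((b:ℂ)*s) by ring, Complex.exp_add]
    field_simp

lemma hasDerivAt_Psi {b : ℝ} (hb : 0 < b) (ξ u : ℝ) :
    HasDerivAt (fun u : ℝ => Complex.log (1 - Complex.I*u*ξ/b))
      (-(Complex.I*ξ) * ((b:ℂ) - Complex.I*u*ξ)⁻¹) u := by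
  have hbC : ((b:ℂ)) ≠ 0 := Complex.ofReal_ne_zero.mpr hb.ne'
  have hw : HasDerivAt (fun u : ℝ => 1 - Complex.I*(u:ℂ)*ξ/b) (-(Complex.I*ξ/b)) u := by
    have h0 : HasDerivAt (fun u : ℝ => (Complex.I*ξ/b) * (u:ℂ)) (Complex.I*ξ/b) u := by
      simpa using ((hasDerivAt_id (u:ℂ)).const_mul (Complex.I*(ξ:ℂ)/b)).comp_ofReal
    have := h0.const_sub 1
    convert this using 2 with y
    · rfl
    ring
  have hre : (1 - Complex.I*(u:ℂ)*ξ/b).re = 1 := by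
    simp [Complex.div_re, Complex.mul_re, Complex.mul_im, Complex.normSq_apply]
  have hmem : (1 - Complex.I*(u:ℂ)*ξ/b) ∈ Complex.slitPlane := by
    rw [Complex.mem_slitPlane_iff, hre]; left; norm_num
  have hlog := hw.clog_real hmem
  convert hlog using 1
  have hne : ((b:ℂ) - Complex.I*u*ξ) ≠ 0 := by
    intro h
    have : ((b:ℂ) - Complex.I*u*ξ).re = 0 := by rw [h]; simp
    simp [Complex.sub_re, Complex.mul_re, Complex.mul_im] at this
    exact hb.ne' this
  field_simp

lemma hasDerivAt_expInt_mul {b s : ℝ} (hb : 0 < b) (hs : 0 < s) :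
    HasDerivAt (fun s : ℝ => expInt (b*s)) (-(Real.exp (-(b*s)) / s)) s := by
  have h2 : HasDerivAt (fun s : ℝ => b * s) b s := by
    simpa using (hasDerivAt_id s).const_mul b
  have := (hasDerivAt_expInt (mul_pos hb hs)).comp s h2
  convert this using 1
  · rfl
  · rfl
  · rfl
  field_simp

lemma contOn_expInt_mul {b : ℝ} (hb : 0 < b) :
    ContinuousOn (fun s : ℝ => expInt (b*s)) (Ioi 0) := fun s hs =>
  ((hasDerivAt_expInt_mul hb hs).continuousAt).continuousWithinAt

lemma integrableOn_expInt_mul {b : ℝ} (hb : 0 < b) :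
    IntegrableOn (fun s : ℝ => expInt (b*s)) (Ioi 0) := by
  have hb' : (0:ℝ) < 1/b := by positivity
  rw [← Ioc_union_Ioi_eq_Ioi hb'.le]
  refine IntegrableOn.union ?_ ?_
  · have hint : IntegrableOn (fun s : ℝ => 2 * b ^ (-(1/2):ℝ) * s ^ (-(1/2):ℝ)) (Ioc 0 (1/b)) := by
      have h0 : IntervalIntegrable (fun s : ℝ => s ^ (-(1/2):ℝ)) volume 0 (1/b) :=
        intervalIntegral.intervalIntegrable_rpow' (by norm_num)
      rw [intervalIntegrable_iff_integrableOn_Ioc_of_le hb'.le] at h0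
      exact h0.const_mul _
    refine hint.mono' ?_ ?_
    · exact ((contOn_expInt_mul hb).mono Ioc_subset_Ioi_self).aestronglyMeasurable measurableSet_Ioc
    · filter_upwards [ae_restrict_mem measurableSet_Ioc] with s hs
      have hs0 : 0 < s := hs.1
      have hbs : 0 < b * s := mul_pos hb hs0
      rw [Real.norm_eq_abs, _root_.abs_of_nonneg (expInt_nonneg hbs)]
      calc expInt (b*s) ≤ 2 * (b*s) ^ (-(1/2):ℝ) := expInt_le_rpow hbs
        _ = 2 * b ^ (-(1/2):ℝ) * s ^ (-(1/2):ℝ) := by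
            rw [Real.mul_rpow hb.le hs0.le]; ring
  · refine (exp_neg_integrableOn_Ioi (1/b) hb).mono' ?_ ?_
    · exact ((contOn_expInt_mul hb).mono (Ioi_subset_Ioi hb'.le)).aestronglyMeasurable
        measurableSet_Ioi
    · filter_upwards [ae_restrict_mem measurableSet_Ioi] with s hs
      have hs0 : 0 < s := hb'.trans hs
      have hbs : 0 < b * s := mul_pos hb hs0
      have h1 : 1 ≤ b * s := by
        have := (div_lt_iff₀ hb).mp hs
        nlinarith
      rw [Real.norm_eq_abs, _root_.abs_of_nonneg (expInt_nonneg hbs), neg_mul]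
      calc expInt (b*s) ≤ Real.exp (-(b*s)) / (b*s) := expInt_le hbs
        _ ≤ Real.exp (-(b*s)) / 1 := by gcongr
        _ = Real.exp (-(b*s)) := div_one _

lemma hasDerivAt_cexp_I (c s : ℝ) :
    HasDerivAt (fun s : ℝ => Complex.exp (Complex.I*s*c))
      (Complex.I*c*Complex.exp (Complex.I*s*c)) s := by
  have h0 : HasDerivAt (fun s : ℝ => (Complex.I*(c:ℂ)) * s) (Complex.I*c) s := by
    simpa using ((hasDerivAt_id (s:ℂ)).const_mul (Complex.I*(c:ℂ))).comp_ofReal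
  have h1 := h0.cexp
  have heq : (fun s : ℝ => Complex.exp (Complex.I*(c:ℂ)*s)) =
      fun s : ℝ => Complex.exp (Complex.I*(s:ℂ)*c) := by
    funext y; congr 1; ring
  rw [heq] at h1
  convert h1 using 1
  ring

lemma norm_cexp_I' (s c : ℝ) : ‖Complex.exp (Complex.I * s * c)‖ = 1 := by
  rw [Complex.norm_exp]
  simp

lemma Phi_eq {b : ℝ} (hb : 0 < b) (ξ u : ℝ) :
    Phi b ξ u = Complex.log (1 - Complex.I*u*ξ/b) := by
  set h : ℝ → ℂ := fun u => Phi b ξ u - Complex.log (1 - Complex.I*u*ξ/b) with hh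
  have hd : ∀ v : ℝ, HasDerivAt h 0 v := fun v => by
    simpa [Pi.sub_def] using (hasDerivAt_Phi hb ξ v).sub (hasDerivAt_Psi hb ξ v)
  have hconst : h u = h 0 :=
    is_const_of_deriv_eq_zero (fun v => (hd v).differentiableAt) (fun v => (hd v).deriv) u 0
  have h0 : h 0 = 0 := by
    simp [hh, Phi, wker]
  have := hconst.trans h0
  simpa [hh, sub_eq_zero] using this

theorem weyl_plus_symbol (a b ξ : ℝ) (ha : 0 < a) (hb : 0 < b) :
    (-(Complex.I * ξ)) * ∫ s in Set.Ioi (0 : ℝ), Complex.exp (Complex.I * s * ξ) * (a * expInt (b * s))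
      = a * Complex.log (1 - Complex.I * ξ / b) := by
  -- the integration by parts
  set g : ℝ → ℂ := fun s => (Complex.exp (Complex.I*s*ξ) - 1) * ((expInt (b*s) : ℝ) : ℂ) with hg
  set g' : ℝ → ℂ := fun s =>
    Complex.I*ξ*Complex.exp (Complex.I*s*ξ) * ((expInt (b*s) : ℝ) : ℂ) + wker b ξ s with hg'
  have hint1 : IntegrableOn (fun s : ℝ =>
      Complex.I*ξ*Complex.exp (Complex.I*s*ξ) * ((expInt (b*s) : ℝ) : ℂ)) (Ioi 0) := by
    refine ((integrableOn_expInt_mul hb).const_mul |ξ|).mono' ?_ ?_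
    · have c1 : ContinuousOn (fun s : ℝ => Complex.I*(ξ:ℂ)*Complex.exp (Complex.I*s*ξ)) (Ioi 0) :=
        (continuous_const.mul (Complex.continuous_exp.comp (by continuity))).continuousOn
      have c2 : ContinuousOn (fun s : ℝ => ((expInt (b*s) : ℝ) : ℂ)) (Ioi 0) :=
        Complex.continuous_ofReal.comp_continuousOn (contOn_expInt_mul hb)
      exact (c1.mul c2).aestronglyMeasurable measurableSet_Ioi
    · filter_upwards [ae_restrict_mem measurableSet_Ioi] with s hs
      have hbs : 0 < b * s := mul_pos hb hs
      have hE := _root_.abs_of_nonneg (expInt_nonneg hbs)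
      have habs : ‖(Complex.exp (Complex.I*(s:ℂ)*(ξ:ℂ)))‖ = 1 := by
        exact norm_cexp_I' s ξ
      simp [norm_mul, hE, habs]
  have hderiv : ∀ s ∈ Ioi (0:ℝ), HasDerivAt g (g' s) s := by
    intro s hs
    have h1 := (hasDerivAt_cexp_I ξ s).sub_const 1
    have h2 := (hasDerivAt_expInt_mul hb hs).ofReal_comp
    have h3 := h1.mul h2
    convert h3 using 1
    · rfl
    · rfl
    simp only [hg', wker]
    push_cast
    try ring
  have hcont : ContinuousWithinAt g (Ici 0) 0 := by
    show Tendsto g (𝓝[Ici 0] 0) (𝓝 (g 0))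
    rw [show g 0 = 0 by simp [hg]]
    have hbd : ∀ᶠ s in 𝓝[Ici (0:ℝ)] 0, ‖g s‖ ≤ 2 * |ξ| * b ^ (-(1/2):ℝ) * Real.sqrt s := by
      filter_upwards [self_mem_nhdsWithin] with s hs
      rcases eq_or_lt_of_le (mem_Ici.mp hs) with h | h
      · simp [hg, ← h]
      · have hbs : 0 < b * s := mul_pos hb h
        rw [hg, norm_mul, Complex.norm_real, Real.norm_eq_abs,
          _root_.abs_of_nonneg (expInt_nonneg hbs)]
        calc ‖Complex.exp (Complex.I*s*ξ) - 1‖ * expInt (b*s)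
            ≤ |s*ξ| * (2 * (b*s) ^ (-(1/2):ℝ)) := by
              refine mul_le_mul ?_ (expInt_le_rpow hbs) (expInt_nonneg hbs) (abs_nonneg _)
              rw [norm_sub_rev]
              have := norm_one_sub_exp_le (s*ξ)
              rwa [show ((s*ξ : ℝ):ℂ) * I = Complex.I * s * ξ by push_cast; ring] at this
          _ = 2 * |ξ| * b ^ (-(1/2):ℝ) * (s * s ^ (-(1/2):ℝ)) := by
              rw [Real.mul_rpow hb.le h.le, abs_mul, _root_.abs_of_pos h]
              ring
          _ = 2 * |ξ| * b ^ (-(1/2):ℝ) * Real.sqrt s := by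
              congr 1
              rw [Real.sqrt_eq_rpow]
              nth_rewrite 1 [← Real.rpow_one s]
              rw [← Real.rpow_add h]
              norm_num
    have htd : Tendsto (fun s : ℝ => 2 * |ξ| * b ^ (-(1/2):ℝ) * Real.sqrt s)
        (𝓝[Ici (0:ℝ)] 0) (𝓝 0) := by
      have h1 : Tendsto (fun s : ℝ => 2 * |ξ| * b ^ (-(1/2):ℝ) * Real.sqrt s) (𝓝 0) (𝓝 0) := by
        have := (Real.continuous_sqrt.tendsto 0).const_mul (2 * |ξ| * b ^ (-(1/2):ℝ))
        simpa using this
      exact h1.mono_left nhdsWithin_le_nhds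
    exact squeeze_zero_norm' hbd htd
  have htop : Tendsto g atTop (𝓝 0) := by
    have hbd : ∀ᶠ s in atTop, ‖g s‖ ≤ 2 * Real.exp (-(b*s)) := by
      filter_upwards [eventually_ge_atTop (1/b)] with s hs
      have hs0 : 0 < s := lt_of_lt_of_le (by positivity) hs
      have hbs : 0 < b * s := mul_pos hb hs0
      have h1 : 1 ≤ b * s := by
        have := (div_le_iff₀ hb).mp hs
        nlinarith
      rw [hg, norm_mul, Complex.norm_real, Real.norm_eq_abs,
        _root_.abs_of_nonneg (expInt_nonneg hbs)]
      calc ‖Complex.exp (Complex.I*s*ξ) - 1‖ * expInt (b*s)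
          ≤ 2 * (Real.exp (-(b*s)) / (b*s)) := by
            refine mul_le_mul ?_ (expInt_le hbs) (expInt_nonneg hbs) (by norm_num)
            calc ‖Complex.exp (Complex.I*s*ξ) - 1‖ ≤ ‖Complex.exp (Complex.I*s*ξ)‖ + ‖(1:ℂ)‖ :=
                norm_sub_le _ _
              _ = 2 := by rw [norm_cexp_I']; norm_num
        _ ≤ 2 * Real.exp (-(b*s)) := by
            rw [mul_le_mul_iff_right₀ (by norm_num : (0:ℝ) < 2)]
            calc Real.exp (-(b*s)) / (b*s) ≤ Real.exp (-(b*s)) / 1 := by gcongr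
              _ = Real.exp (-(b*s)) := div_one _
    have htd : Tendsto (fun s : ℝ => 2 * Real.exp (-(b*s))) atTop (𝓝 0) := by
      have h2 : Tendsto (fun s : ℝ => Real.exp (-(b*s))) atTop (𝓝 0) := by
        have h3 : Tendsto (fun s : ℝ => b * s) atTop atTop := tendsto_id.const_mul_atTop hb
        have h4 := Real.tendsto_exp_neg_atTop_nhds_zero.comp h3
        exact h4
      simpa using h2.const_mul 2
    exact squeeze_zero_norm' hbd htd
  have hibp := integral_Ioi_of_hasDerivAt_of_tendsto hcont hderiv
    (hint1.add (integrableOn_wker b ξ hb)) htop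
  rw [show g 0 = 0 by simp [hg], sub_zero] at hibp
  have hsplit : (∫ s in Ioi (0:ℝ),
      Complex.I*ξ*Complex.exp (Complex.I*s*ξ) * ((expInt (b*s) : ℝ) : ℂ)) + Phi b ξ 1 = 0 := by
    rw [Phi]
    simp_rw [one_mul]
    rw [← integral_add hint1 (integrableOn_wker b ξ hb)]
    exact hibp
  have hphi := Phi_eq hb ξ 1
  have hcast : Complex.log (1 - Complex.I*(1:ℝ)*ξ/b) = Complex.log (1 - Complex.I*ξ/b) := by
    norm_num
  rw [hphi, hcast] at hsplit
  have hfactor : (∫ s in Ioi (0:ℝ), Complex.exp (Complex.I*s*ξ) * ((a:ℂ) * (expInt (b*s) : ℝ)))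
      = (a:ℂ) * ∫ s in Ioi (0:ℝ), Complex.exp (Complex.I*s*ξ) * ((expInt (b*s) : ℝ) : ℂ) := by
    rw [← integral_const_mul]
    congr 1
    funext s
    ring
  have hmul : (∫ s in Ioi (0:ℝ),
      Complex.I*ξ*Complex.exp (Complex.I*s*ξ) * ((expInt (b*s) : ℝ) : ℂ))
      = Complex.I*ξ * ∫ s in Ioi (0:ℝ), Complex.exp (Complex.I*s*ξ) * ((expInt (b*s) : ℝ) : ℂ) := by
    rw [← integral_const_mul]
    congr 1
    funext s
    ring
  rw [hfactor]
  rw [hmul] at hsplit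
  have : -(Complex.I*ξ) * ∫ s in Ioi (0:ℝ), Complex.exp (Complex.I*s*ξ) * ((expInt (b*s) : ℝ) : ℂ)
      = Complex.log (1 - Complex.I*ξ/b) := by
    rw [neg_mul]
    linear_combination -hsplit
  linear_combination (a:ℂ) * this
end

section
/- For a, b > 0 and ξ ∈ ℝ: lim_{γ→0⁺} [(a/2)∫_γ^∞ (e^{iξy} - 1)(e^{-√b·y}/y)dy + (a/2)∫_γ^∞ (e^{-iξy} - 1)(e^{-√b·y}/y)dy] = -(a/2)·ln(1 + ξ²/b). -/
open Complex MeasureTheory Filter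

section CPELaux
open Set

lemma hasDerivAt_exp_mul' (t u : ℝ) :
    HasDerivAt (fun y : ℝ => Real.exp (t * y)) (t * Real.exp (t * u)) u := by
  simpa [mul_comm, Function.comp_def] using (Real.hasDerivAt_exp (t * u)).comp u ((hasDerivAt_id u).const_mul t)

lemma tendsto_exp_neg_mul (s : ℝ) (hs : 0 < s) :
    Tendsto (fun y : ℝ => Real.exp (-(s * y))) atTop (nhds 0) := by
  have h : Tendsto (fun y : ℝ => s * y) atTop atTop := tendsto_id.const_mul_atTop hs
  have := Real.tendsto_exp_neg_atTop_nhds_zero.comp h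
  simpa [Function.comp_def] using this

lemma inner_integrand_integrable (ξ s : ℝ) (hs : 0 < s) :
    IntegrableOn (fun y : ℝ => 2 * (Real.cos (ξ * y) - 1) * Real.exp (-(s * y))) (Ioi (0:ℝ)) := by
  have hbase : IntegrableOn (fun y : ℝ => Real.exp (-s * y)) (Ioi (0:ℝ)) :=
    exp_neg_integrableOn_Ioi 0 hs
  refine ((hbase.const_mul 4).mono ?_ ?_)
  · exact ((by fun_prop : Continuous fun y : ℝ => 2 * (Real.cos (ξ * y) - 1) * Real.exp (-(s * y)))).aestronglyMeasurable
  · refine Eventually.of_forall fun y => ?_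
    have h1 : |Real.cos (ξ * y) - 1| ≤ 2 := by
      have := Real.neg_one_le_cos (ξ * y)
      have := Real.cos_le_one (ξ * y)
      rw [abs_le]; constructor <;> linarith
    have he : (0:ℝ) < Real.exp (-(s*y)) := Real.exp_pos _
    simp only [Real.norm_eq_abs, abs_mul, Real.abs_exp, neg_mul]
    rw [abs_of_pos (by norm_num : (0:ℝ) < 2), abs_of_pos (by norm_num : (0:ℝ) < 4)]
    nlinarith [mul_le_mul_of_nonneg_right h1 he.le]

lemma inner_integral (ξ : ℝ) {s : ℝ} (hs : 0 < s) :
    ∫ y in Ioi (0:ℝ), 2 * (Real.cos (ξ * y) - 1) * Real.exp (-(s * y))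
      = -(2 * ξ ^ 2 / (s * (s ^ 2 + ξ ^ 2))) := by
  have hs2 : (0:ℝ) < s ^ 2 + ξ ^ 2 := by positivity
  set F : ℝ → ℝ := fun y => (2 / (s ^ 2 + ξ ^ 2)) *
      (Real.exp (-(s * y)) * (ξ * Real.sin (ξ * y) - s * Real.cos (ξ * y)))
      + (2 / s) * Real.exp (-(s * y)) with hF
  have hderiv : ∀ y ∈ Ici (0:ℝ),
      HasDerivAt F (2 * (Real.cos (ξ * y) - 1) * Real.exp (-(s * y))) y := by
    intro y _
    have he : HasDerivAt (fun y : ℝ => Real.exp (-(s * y))) (-s * Real.exp (-(s * y))) y := by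
      simpa [neg_mul] using hasDerivAt_exp_mul' (-s) y
    have hsin : HasDerivAt (fun y : ℝ => Real.sin (ξ * y)) (ξ * Real.cos (ξ * y)) y := by
      simpa [mul_comm, Function.comp_def] using (Real.hasDerivAt_sin (ξ * y)).comp y ((hasDerivAt_id y).const_mul ξ)
    have hcos : HasDerivAt (fun y : ℝ => Real.cos (ξ * y)) (-(ξ * Real.sin (ξ * y))) y := by
      simpa [mul_comm, Function.comp_def] using (Real.hasDerivAt_cos (ξ * y)).comp y ((hasDerivAt_id y).const_mul ξ)
    have h1 := ((he.mul ((hsin.const_mul ξ).sub (hcos.const_mul s))).const_mul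
      (2 / (s ^ 2 + ξ ^ 2))).add (he.const_mul (2 / s))
    refine h1.congr_deriv ?_
    simp only [Pi.sub_apply]
    field_simp
    ring
  have htop : Tendsto F atTop (nhds 0) := by
    have h0 := tendsto_exp_neg_mul s hs
    have h1 : Tendsto (fun y : ℝ => Real.exp (-(s*y)) *
        (ξ * Real.sin (ξ * y) - s * Real.cos (ξ * y))) atTop (nhds 0) := by
      refine squeeze_zero_norm (f := fun y : ℝ => Real.exp (-(s*y)) *
          (ξ * Real.sin (ξ * y) - s * Real.cos (ξ * y)))
        (a := fun y => Real.exp (-(s*y)) * (|ξ| + |s|)) ?_ ?_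
      · intro y
        rw [norm_mul, Real.norm_eq_abs, Real.norm_eq_abs, Real.abs_exp]
        refine mul_le_mul_of_nonneg_left ?_ (Real.exp_pos _).le
        calc |ξ * Real.sin (ξ*y) - s * Real.cos (ξ*y)|
            ≤ |ξ * Real.sin (ξ*y)| + |s * Real.cos (ξ*y)| := abs_sub _ _
          _ ≤ |ξ| * 1 + |s| * 1 := by
              rw [abs_mul, abs_mul]
              gcongr
              · exact Real.abs_sin_le_one _
              · exact Real.abs_cos_le_one _
          _ = |ξ| + |s| := by ring
      · simpa using h0.mul_const (|ξ| + |s|)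
    have := (h1.const_mul (2 / (s ^ 2 + ξ ^ 2))).add (h0.const_mul (2 / s))
    simpa using this
  have := integral_Ioi_of_hasDerivAt_of_tendsto' (fun y hy => hderiv y hy)
    (inner_integrand_integrable ξ s hs) htop
  rw [this, hF]
  simp only [mul_zero, neg_zero, Real.exp_zero, Real.sin_zero, Real.cos_zero]
  field_simp
  ring

lemma exp_integral_s {c y : ℝ} (hy : 0 < y) :
    ∫ s in Ioi c, Real.exp (-(s * y)) = Real.exp (-(c * y)) / y := by
  have hderiv : ∀ s ∈ Ici c,
      HasDerivAt (fun s : ℝ => -(Real.exp (-(y * s)) / y)) (Real.exp (-(s * y))) s := by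
    intro s _
    have h := ((hasDerivAt_exp_mul' (-y) s).div_const y).neg
    rw [show (fun s : ℝ => -(Real.exp (-(y * s)) / y)) = -fun x => Real.exp (-y * x) / y by
      ext u; simp [neg_mul]]
    refine h.congr_deriv ?_
    field_simp [mul_comm]
  have hint : IntegrableOn (fun s : ℝ => Real.exp (-(s * y))) (Ioi c) := by
    have := exp_neg_integrableOn_Ioi c hy
    refine this.congr_fun (fun s _ => by dsimp only; rw [neg_mul, mul_comm]) measurableSet_Ioi
  have htop : Tendsto (fun s : ℝ => -(Real.exp (-(y * s)) / y)) atTop (nhds 0) := by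
    have := (tendsto_exp_neg_mul y hy).div_const y
    simpa using this.neg
  have := integral_Ioi_of_hasDerivAt_of_tendsto' hderiv hint htop
  rw [this]
  rw [mul_comm]
  ring

lemma outer_integral (ξ : ℝ) {c : ℝ} (hc : 0 < c) :
    ∫ s in Ioi c, -(2 * ξ ^ 2 / (s * (s ^ 2 + ξ ^ 2))) = -Real.log (1 + ξ ^ 2 / c ^ 2) := by
  set H : ℝ → ℝ := fun s => Real.log (s ^ 2 + ξ ^ 2) - 2 * Real.log s with hH
  have hderiv : ∀ s ∈ Ici c, HasDerivAt H (-(2 * ξ ^ 2 / (s * (s ^ 2 + ξ ^ 2)))) s := by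
    intro s hs
    have hs0 : (0:ℝ) < s := lt_of_lt_of_le hc hs
    have hs2 : (0:ℝ) < s ^ 2 + ξ ^ 2 := by positivity
    have h1 : HasDerivAt (fun s : ℝ => s ^ 2 + ξ ^ 2) (2 * s) s := by
      simpa using (hasDerivAt_pow 2 s).add_const (ξ ^ 2)
    have h2 : HasDerivAt (fun s : ℝ => Real.log (s ^ 2 + ξ ^ 2)) ((2 * s) / (s ^ 2 + ξ ^ 2)) s := by
      simpa [div_eq_mul_inv, mul_comm, Function.comp_def] using (Real.hasDerivAt_log hs2.ne').comp s h1
    have h3 : HasDerivAt (fun s : ℝ => 2 * Real.log s) (2 * s⁻¹) s :=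
      (Real.hasDerivAt_log hs0.ne').const_mul 2
    refine (h2.sub h3).congr_deriv ?_
    field_simp
    ring
  have hint : IntegrableOn (fun s : ℝ => -(2 * ξ ^ 2 / (s * (s ^ 2 + ξ ^ 2)))) (Ioi c) := by
    have hb : IntegrableOn (fun s : ℝ => s ^ (-3 : ℝ)) (Ioi c) :=
      integrableOn_Ioi_rpow_of_lt (by norm_num) hc
    refine ((hb.const_mul (2 * ξ ^ 2)).mono ?_ ?_)
    · refine ((by measurability : Measurable fun s : ℝ =>
        -(2 * ξ ^ 2 / (s * (s ^ 2 + ξ ^ 2))))).aestronglyMeasurable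
    · filter_upwards [ae_restrict_mem measurableSet_Ioi] with s hs
      have hs0 : (0:ℝ) < s := lt_trans hc hs
      have hr : s ^ (-3 : ℝ) = (s ^ 3)⁻¹ := by
        rw [show (-3 : ℝ) = -(3:ℕ) by norm_num, Real.rpow_neg hs0.le, Real.rpow_natCast]
      rw [Real.norm_eq_abs, Real.norm_eq_abs, abs_neg,
        _root_.abs_of_nonneg (show (0:ℝ) ≤ 2 * ξ ^ 2 / (s * (s ^ 2 + ξ ^ 2)) by positivity),
        _root_.abs_of_nonneg (show (0:ℝ) ≤ 2 * ξ ^ 2 * s ^ (-3:ℝ) by rw [hr]; positivity), hr]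
      rw [div_le_iff₀ (by positivity)]
      have h4 : s * s ^ 2 ≤ s * (s ^ 2 + ξ ^ 2) := by nlinarith
      have h5 : (1:ℝ) ≤ (s ^ 3)⁻¹ * (s * (s ^ 2 + ξ ^ 2)) := by
        rw [inv_mul_eq_div, le_div_iff₀ (by positivity)]
        nlinarith
      nlinarith [mul_le_mul_of_nonneg_left h5 (show (0:ℝ) ≤ 2 * ξ ^ 2 by positivity)]
  have htop : Tendsto H atTop (nhds 0) := by
    have h1 : Tendsto (fun s : ℝ => 1 + ξ ^ 2 / s ^ 2) atTop (nhds 1) := by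
      have : Tendsto (fun s : ℝ => ξ ^ 2 / s ^ 2) atTop (nhds 0) := by
        apply Tendsto.div_atTop tendsto_const_nhds
        exact tendsto_pow_atTop (by norm_num)
      simpa using tendsto_const_nhds.add this
    have h2 : Tendsto (fun s : ℝ => Real.log (1 + ξ ^ 2 / s ^ 2)) atTop (nhds 0) := by
      have := (Real.continuousAt_log (by norm_num : (1:ℝ) ≠ 0)).tendsto.comp h1
      simpa [Function.comp_def] using this
    refine h2.congr' ?_
    filter_upwards [eventually_gt_atTop (0:ℝ)] with s hs
    rw [hH]
    have hs2 : (0:ℝ) < s ^ 2 + ξ ^ 2 := by positivity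
    have : (1 : ℝ) + ξ ^ 2 / s ^ 2 = (s ^ 2 + ξ ^ 2) / s ^ 2 := by field_simp
    rw [this, Real.log_div hs2.ne' (by positivity), Real.log_pow]
    push_cast
    ring
  have := integral_Ioi_of_hasDerivAt_of_tendsto' hderiv hint htop
  rw [this, hH]
  have hc2 : (0:ℝ) < c ^ 2 + ξ ^ 2 := by positivity
  have : (1 : ℝ) + ξ ^ 2 / c ^ 2 = (c ^ 2 + ξ ^ 2) / c ^ 2 := by field_simp
  rw [this, Real.log_div hc2.ne' (by positivity), Real.log_pow]
  push_cast
  ring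

lemma f_abs_bound (ξ c : ℝ) (hc : 0 < c) {y : ℝ} (hy : 0 < y) :
    2 * (1 - Real.cos (ξ * y)) * (Real.exp (-(c * y)) / y)
      ≤ (2 * ξ ^ 2 / c) * Real.exp (-(c / 2 * y)) := by
  have h1 : 2 * (1 - Real.cos (ξ * y)) ≤ (ξ * y) ^ 2 := by
    nlinarith [Real.one_sub_sq_div_two_le_cos (x := ξ * y)]
  have he : (0:ℝ) < Real.exp (-(c * y)) := Real.exp_pos _
  have step1 : 2 * (1 - Real.cos (ξ * y)) * (Real.exp (-(c * y)) / y)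
      ≤ ξ ^ 2 * (y * Real.exp (-(c * y))) := by
    rw [mul_comm (ξ ^ 2)]
    have := mul_le_mul_of_nonneg_right h1 (le_of_lt (div_pos he hy))
    calc 2 * (1 - Real.cos (ξ * y)) * (Real.exp (-(c * y)) / y)
        ≤ (ξ * y) ^ 2 * (Real.exp (-(c * y)) / y) := this
      _ = y * Real.exp (-(c * y)) * ξ ^ 2 := by field_simp
  have step2 : y * Real.exp (-(c * y)) ≤ (2 / c) * Real.exp (-(c / 2 * y)) := by
    have hx := Real.add_one_le_exp (c / 2 * y)
    have hgrow : c / 2 * y ≤ Real.exp (c / 2 * y) := by linarith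
    have hsplit : Real.exp (-(c * y)) = Real.exp (-(c / 2 * y)) * Real.exp (-(c / 2 * y)) := by
      rw [← Real.exp_add]; congr 1; ring
    have hinv : Real.exp (-(c / 2 * y)) = (Real.exp (c / 2 * y))⁻¹ := by
      rw [Real.exp_neg]
    have hyb : y * Real.exp (-(c / 2 * y)) ≤ 2 / c := by
      rw [hinv]
      rw [mul_inv_le_iff₀ (Real.exp_pos _)]
      calc y = (2 / c) * (c / 2 * y) := by field_simp
        _ ≤ (2 / c) * Real.exp (c / 2 * y) := by
            exact mul_le_mul_of_nonneg_left hgrow (by positivity)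
        _ = 2 / c * Real.exp (c / 2 * y) := rfl
    calc y * Real.exp (-(c * y)) = (y * Real.exp (-(c / 2 * y))) * Real.exp (-(c / 2 * y)) := by
          rw [hsplit]; ring
      _ ≤ (2 / c) * Real.exp (-(c / 2 * y)) :=
          mul_le_mul_of_nonneg_right hyb (Real.exp_pos _).le
  calc 2 * (1 - Real.cos (ξ * y)) * (Real.exp (-(c * y)) / y)
      ≤ ξ ^ 2 * (y * Real.exp (-(c * y))) := step1
    _ ≤ ξ ^ 2 * ((2 / c) * Real.exp (-(c / 2 * y))) :=
        mul_le_mul_of_nonneg_left step2 (sq_nonneg ξ)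
    _ = (2 * ξ ^ 2 / c) * Real.exp (-(c / 2 * y)) := by ring

lemma f_abs_eq (ξ c : ℝ) {y : ℝ} (hy : 0 < y) :
    ‖2 * (Real.cos (ξ * y) - 1) * (Real.exp (-(c * y)) / y)‖
      = 2 * (1 - Real.cos (ξ * y)) * (Real.exp (-(c * y)) / y) := by
  rw [Real.norm_eq_abs, abs_mul, abs_mul,
    _root_.abs_of_nonneg (show (0:ℝ) ≤ Real.exp (-(c * y)) / y by positivity),
    _root_.abs_of_nonneg (show (0:ℝ) ≤ (2:ℝ) by norm_num),
    abs_of_nonpos (show Real.cos (ξ * y) - 1 ≤ 0 by nlinarith [Real.cos_le_one (ξ * y)])]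
  ring

lemma f_integrable (ξ : ℝ) {c : ℝ} (hc : 0 < c) :
    IntegrableOn (fun y : ℝ => 2 * (Real.cos (ξ * y) - 1) * (Real.exp (-(c * y)) / y))
      (Ioi (0:ℝ)) := by
  have hbase : IntegrableOn (fun y : ℝ => Real.exp (-(c / 2) * y)) (Ioi (0:ℝ)) :=
    exp_neg_integrableOn_Ioi 0 (half_pos hc)
  refine (hbase.const_mul (2 * ξ ^ 2 / c)).mono ?_ ?_
  · exact ((by fun_prop : Measurable fun y : ℝ =>
      2 * (Real.cos (ξ * y) - 1) * (Real.exp (-(c * y)) / y))).aestronglyMeasurable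
  · filter_upwards [ae_restrict_mem measurableSet_Ioi] with y hy
    rw [f_abs_eq ξ c hy, Real.norm_eq_abs,
      _root_.abs_of_nonneg (show (0:ℝ) ≤ 2 * ξ ^ 2 / c * Real.exp (-(c / 2) * y) by positivity)]
    have := f_abs_bound ξ c hc hy
    calc 2 * (1 - Real.cos (ξ * y)) * (Real.exp (-(c * y)) / y)
        ≤ (2 * ξ ^ 2 / c) * Real.exp (-(c / 2 * y)) := this
      _ = 2 * ξ ^ 2 / c * Real.exp (-(c / 2) * y) := by rw [neg_mul]

lemma fubini_eval (ξ : ℝ) {c : ℝ} (hc : 0 < c) :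
    ∫ y in Ioi (0:ℝ), 2 * (Real.cos (ξ * y) - 1) * (Real.exp (-(c * y)) / y)
      = -Real.log (1 + ξ ^ 2 / c ^ 2) := by
  set g : ℝ → ℝ → ℝ := fun y s => 2 * (Real.cos (ξ * y) - 1) * Real.exp (-(s * y)) with hg
  have hstep1 : ∀ y ∈ Ioi (0:ℝ),
      2 * (Real.cos (ξ * y) - 1) * (Real.exp (-(c * y)) / y) = ∫ s in Ioi c, g y s := by
    intro y hy
    rw [hg]
    simp only
    rw [MeasureTheory.integral_const_mul, exp_integral_s hy]
  have hmeas : AEStronglyMeasurable (Function.uncurry g)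
      ((volume.restrict (Ioi (0:ℝ))).prod (volume.restrict (Ioi c))) := by
    apply Continuous.aestronglyMeasurable
    have : Continuous fun p : ℝ × ℝ => 2 * (Real.cos (ξ * p.1) - 1) * Real.exp (-(p.2 * p.1)) :=
      by fun_prop
    exact this
  have hprod : Integrable (Function.uncurry g)
      ((volume.restrict (Ioi (0:ℝ))).prod (volume.restrict (Ioi c))) := by
    rw [integrable_prod_iff hmeas]
    constructor
    · filter_upwards [ae_restrict_mem measurableSet_Ioi] with y hy
      have hbase : IntegrableOn (fun s : ℝ => Real.exp (-y * s)) (Ioi c) :=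
        exp_neg_integrableOn_Ioi c hy
      have : IntegrableOn (fun s : ℝ => 2 * (Real.cos (ξ * y) - 1) * Real.exp (-(s * y)))
          (Ioi c) := by
        refine IntegrableOn.congr_fun (hbase.const_mul (2 * (Real.cos (ξ * y) - 1)))
          (fun s _ => by rw [neg_mul, mul_comm y s]) measurableSet_Ioi
      exact this
    · refine Integrable.congr ((f_integrable ξ hc).neg) ?_
      filter_upwards [ae_restrict_mem measurableSet_Ioi] with y hy
      simp only [Function.uncurry, Pi.neg_apply]
      have hnorm : ∀ s : ℝ, ‖g y s‖ = 2 * (1 - Real.cos (ξ * y)) * Real.exp (-(s * y)) := by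
        intro s
        rw [hg]
        simp only
        rw [Real.norm_eq_abs, abs_mul, abs_mul, Real.abs_exp,
          _root_.abs_of_nonneg (show (0:ℝ) ≤ (2:ℝ) by norm_num),
          abs_of_nonpos (show Real.cos (ξ * y) - 1 ≤ 0 by
            nlinarith [Real.cos_le_one (ξ * y)])]
        ring
      simp only [hnorm]
      rw [MeasureTheory.integral_const_mul, exp_integral_s hy]
      ring
  calc ∫ y in Ioi (0:ℝ), 2 * (Real.cos (ξ * y) - 1) * (Real.exp (-(c * y)) / y)
      = ∫ y in Ioi (0:ℝ), ∫ s in Ioi c, g y s :=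
        setIntegral_congr_fun measurableSet_Ioi hstep1
    _ = ∫ s in Ioi c, ∫ y in Ioi (0:ℝ), g y s := integral_integral_swap hprod
    _ = ∫ s in Ioi c, -(2 * ξ ^ 2 / (s * (s ^ 2 + ξ ^ 2))) := by
        refine setIntegral_congr_fun measurableSet_Ioi fun s hs => ?_
        exact inner_integral ξ (lt_trans hc hs)
    _ = -Real.log (1 + ξ ^ 2 / c ^ 2) := outer_integral ξ hc

lemma tendsto_tail (ξ : ℝ) {c : ℝ} (hc : 0 < c) :
    Tendsto (fun γ : ℝ => ∫ y in Ioi γ, 2 * (Real.cos (ξ * y) - 1) * (Real.exp (-(c * y)) / y))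
      (nhdsWithin 0 (Ioi 0))
      (nhds (∫ y in Ioi (0:ℝ), 2 * (Real.cos (ξ * y) - 1) * (Real.exp (-(c * y)) / y))) := by
  set f : ℝ → ℝ := fun y => 2 * (Real.cos (ξ * y) - 1) * (Real.exp (-(c * y)) / y) with hf
  have hfi := f_integrable ξ hc
  have hsplit : ∀ γ : ℝ, 0 < γ →
      ∫ y in Ioi γ, f y = (∫ y in Ioi (0:ℝ), f y) - ∫ y in Ioc 0 γ, f y := by
    intro γ hγ
    have h := setIntegral_union (μ := volume) (f := f) (Ioc_disjoint_Ioi (le_refl γ))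
      measurableSet_Ioi (hfi.mono_set Ioc_subset_Ioi_self)
      (hfi.mono_set (Ioi_subset_Ioi hγ.le))
    rw [Ioc_union_Ioi_eq_Ioi hγ.le] at h
    rw [h]; ring
  have hz : Tendsto (fun γ : ℝ => ∫ y in Ioc (0:ℝ) γ, f y)
      (nhdsWithin 0 (Ioi 0)) (nhds 0) := by
    apply squeeze_zero_norm' (a := fun γ : ℝ => ξ ^ 2 * γ * γ)
    · filter_upwards [self_mem_nhdsWithin] with γ hγ
      have hγ : (0:ℝ) < γ := hγ
      have hb : ∀ y ∈ Ioc (0:ℝ) γ, ‖f y‖ ≤ ξ ^ 2 * γ := by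
        intro y hy
        obtain ⟨hy0, hyγ⟩ := hy
        have h1 : 2 * (1 - Real.cos (ξ * y)) ≤ (ξ * y) ^ 2 := by
          nlinarith [Real.one_sub_sq_div_two_le_cos (x := ξ * y)]
        have he1 : Real.exp (-(c * y)) ≤ 1 := by
          rw [Real.exp_le_one_iff]
          nlinarith
        have hnorm : ‖f y‖ = 2 * (1 - Real.cos (ξ * y)) * (Real.exp (-(c * y)) / y) := by
          rw [hf]
          simp only
          rw [Real.norm_eq_abs, abs_mul, abs_mul,
            _root_.abs_of_nonneg (show (0:ℝ) ≤ Real.exp (-(c * y)) / y by positivity),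
            _root_.abs_of_nonneg (show (0:ℝ) ≤ (2:ℝ) by norm_num),
            abs_of_nonpos (show Real.cos (ξ * y) - 1 ≤ 0 by
              nlinarith [Real.cos_le_one (ξ * y)])]
          ring
        rw [hnorm]
        calc 2 * (1 - Real.cos (ξ * y)) * (Real.exp (-(c * y)) / y)
            ≤ (ξ * y) ^ 2 * (Real.exp (-(c * y)) / y) := by
              exact mul_le_mul_of_nonneg_right h1 (by positivity)
          _ = ξ ^ 2 * y * Real.exp (-(c * y)) := by field_simp
          _ ≤ ξ ^ 2 * y * 1 := by
              exact mul_le_mul_of_nonneg_left he1 (by positivity)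
          _ = ξ ^ 2 * y := by ring
          _ ≤ ξ ^ 2 * γ := by nlinarith [sq_nonneg ξ]
      have hvol : volume (Ioc (0:ℝ) γ) < ⊤ := by
        rw [Real.volume_Ioc]; exact ENNReal.ofReal_lt_top
      have := norm_setIntegral_le_of_norm_le_const hvol hb
      rw [Real.volume_real_Ioc_of_le (show (0:ℝ) ≤ γ by linarith)] at this
      calc ‖∫ y in Ioc (0:ℝ) γ, f y‖ ≤ ξ ^ 2 * γ * (γ - 0) := this
        _ = ξ ^ 2 * γ * γ := by ring
    · have hcont : Continuous fun γ : ℝ => ξ ^ 2 * γ * γ := by fun_prop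
      have h2 := (hcont.tendsto 0).mono_left (nhdsWithin_le_nhds (s := Ioi (0:ℝ)))
      simpa using h2
  have := (tendsto_const_nhds (x := ∫ y in Ioi (0:ℝ), f y)
    (f := nhdsWithin (0:ℝ) (Ioi 0))).sub hz
  rw [sub_zero] at this
  refine this.congr' ?_
  filter_upwards [self_mem_nhdsWithin] with γ hγ
  exact (hsplit γ hγ).symm

end CPELaux

open Set in
theorem compound_poisson_exponent_limit (a b ξ : ℝ) (ha : 0 < a) (hb : 0 < b) :
    Tendsto (fun γ : ℝ =>
        (a / 2 : ℂ) * (∫ y in Set.Ioi γ,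
            (Complex.exp (Complex.I * ξ * y) - 1) * (Real.exp (-(Real.sqrt b) * y) / y))
        + (a / 2) * ∫ y in Set.Ioi γ,
            (Complex.exp (-(Complex.I * ξ * y)) - 1) * (Real.exp (-(Real.sqrt b) * y) / y))
      (nhdsWithin 0 (Set.Ioi 0))
      (nhds (-(a / 2 * Real.log (1 + ξ ^ 2 / b)) : ℂ)) := by
  set c : ℝ := Real.sqrt b with hcdef
  have hc : 0 < c := Real.sqrt_pos.2 hb
  have hc2 : c ^ 2 = b := Real.sq_sqrt hb.le
  set f : ℝ → ℝ := fun y => 2 * (Real.cos (ξ * y) - 1) * (Real.exp (-(c * y)) / y) with hf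
  -- the real limit
  have hreal : Tendsto (fun γ : ℝ => ∫ y in Ioi γ, f y) (nhdsWithin 0 (Ioi 0))
      (nhds (-Real.log (1 + ξ ^ 2 / b))) := by
    have h := tendsto_tail ξ hc
    rw [fubini_eval ξ hc] at h
    rw [hc2] at h
    exact h
  have hcplx : Tendsto (fun γ : ℝ => (a / 2 : ℂ) * ((∫ y in Ioi γ, f y : ℝ) : ℂ))
      (nhdsWithin 0 (Ioi 0)) (nhds (-(a / 2 * Real.log (1 + ξ ^ 2 / b)) : ℂ)) := by
    have h1 : Tendsto (fun γ : ℝ => ((∫ y in Ioi γ, f y : ℝ) : ℂ)) (nhdsWithin 0 (Ioi 0))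
        (nhds ((-Real.log (1 + ξ ^ 2 / b) : ℝ) : ℂ)) :=
      (Complex.continuous_ofReal.tendsto _).comp hreal
    have h2 := h1.const_mul (a / 2 : ℂ)
    have : (a / 2 : ℂ) * ((-Real.log (1 + ξ ^ 2 / b) : ℝ) : ℂ)
        = (-(a / 2 * Real.log (1 + ξ ^ 2 / b)) : ℂ) := by push_cast; ring
    rwa [this] at h2
  refine hcplx.congr' ?_
  filter_upwards [self_mem_nhdsWithin] with γ hγ
  have hγ : (0:ℝ) < γ := hγ
  -- integrability of the two complex integrands
  have hbase : IntegrableOn (fun y : ℝ => (2 / γ) * Real.exp (-c * y)) (Ioi γ) :=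
    (exp_neg_integrableOn_Ioi γ hc).const_mul _
  have hbound : ∀ t : ℝ, ∀ y ∈ Ioi γ,
      ‖(Complex.exp (Complex.I * t * y) - 1) * ((Real.exp (-c * y) / y : ℝ) : ℂ)‖
        ≤ ‖(2 / γ) * Real.exp (-c * y)‖ := by
    intro t y hy
    have hy0 : (0:ℝ) < y := lt_trans hγ hy
    rw [norm_mul]
    have h1 : ‖Complex.exp (Complex.I * t * y) - 1‖ ≤ 2 := by
      calc ‖Complex.exp (Complex.I * t * y) - 1‖
          ≤ ‖Complex.exp (Complex.I * t * y)‖ + ‖(1:ℂ)‖ := norm_sub_le _ _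
        _ = Real.exp ((Complex.I * t * y).re) + 1 := by
            rw [Complex.norm_exp, norm_one]
        _ = 2 := by
            simp
            norm_num
    have h2 : ‖((Real.exp (-c * y) / y : ℝ) : ℂ)‖ = Real.exp (-c * y) / y := by
      rw [Complex.norm_real, Real.norm_eq_abs,
        _root_.abs_of_nonneg (by positivity : (0:ℝ) ≤ Real.exp (-c * y) / y)]
    rw [h2, Real.norm_eq_abs,
      _root_.abs_of_nonneg (by positivity : (0:ℝ) ≤ (2 / γ) * Real.exp (-c * y))]
    have h3 : Real.exp (-c * y) / y ≤ Real.exp (-c * y) / γ :=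
      div_le_div_of_nonneg_left (Real.exp_pos _).le hγ (le_of_lt hy)
    calc ‖Complex.exp (Complex.I * t * y) - 1‖ * (Real.exp (-c * y) / y)
        ≤ 2 * (Real.exp (-c * y) / γ) :=
          mul_le_mul h1 h3 (by positivity) (by norm_num)
      _ = (2 / γ) * Real.exp (-c * y) := by ring
  have hmeasA : AEStronglyMeasurable
      (fun y : ℝ => (Complex.exp (Complex.I * ξ * y) - 1) * ((Real.exp (-c * y) / y : ℝ) : ℂ))
      (volume.restrict (Ioi γ)) := by
    apply Measurable.aestronglyMeasurable
    fun_prop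
  have hmeasB : AEStronglyMeasurable
      (fun y : ℝ => (Complex.exp (-(Complex.I * ξ * y)) - 1) * ((Real.exp (-c * y) / y : ℝ) : ℂ))
      (volume.restrict (Ioi γ)) := by
    apply Measurable.aestronglyMeasurable
    fun_prop
  have hA : IntegrableOn
      (fun y : ℝ => (Complex.exp (Complex.I * ξ * y) - 1) * ((Real.exp (-c * y) / y : ℝ) : ℂ))
      (Ioi γ) := by
    refine Integrable.mono hbase hmeasA ?_
    filter_upwards [ae_restrict_mem measurableSet_Ioi] with y hy
    exact hbound ξ y hy
  have hB : IntegrableOn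
      (fun y : ℝ => (Complex.exp (-(Complex.I * ξ * y)) - 1) * ((Real.exp (-c * y) / y : ℝ) : ℂ))
      (Ioi γ) := by
    refine Integrable.mono hbase hmeasB ?_
    filter_upwards [ae_restrict_mem measurableSet_Ioi] with y hy
    have h := hbound (-ξ) y hy
    have heq : Complex.I * (-ξ : ℝ) * y = -(Complex.I * ξ * y) := by push_cast; ring
    rw [heq] at h
    exact h
  -- combine
  have hkey : ∀ y : ℝ,
      (Complex.exp (Complex.I * ξ * y) - 1) * ((Real.exp (-c * y) / y : ℝ) : ℂ)
      + (Complex.exp (-(Complex.I * ξ * y)) - 1) * ((Real.exp (-c * y) / y : ℝ) : ℂ)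
      = ((f y : ℝ) : ℂ) := by
    intro y
    have e1 : Complex.exp (Complex.I * ξ * y) = Complex.exp ((ξ * y : ℝ) * Complex.I) := by
      congr 1; push_cast; ring
    have e2 : Complex.exp (-(Complex.I * ξ * y))
        = Complex.exp ((-(ξ * y) : ℝ) * Complex.I) := by
      congr 1; push_cast; ring
    rw [e1, e2, Complex.exp_mul_I, Complex.exp_mul_I, hf]
    push_cast
    simp only [Complex.cos_neg, Complex.sin_neg]
    ring
  have hEq : (a / 2 : ℂ) * (∫ y in Ioi γ,
        (Complex.exp (Complex.I * ξ * y) - 1) * ((Real.exp (-c * y) : ℂ) / (y : ℂ)))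
      + (a / 2) * ∫ y in Ioi γ,
        (Complex.exp (-(Complex.I * ξ * y)) - 1) * ((Real.exp (-c * y) : ℂ) / (y : ℂ))
      = (a / 2 : ℂ) * ((∫ y in Ioi γ, f y : ℝ) : ℂ) := by
    simp only [← Complex.ofReal_div]
    calc (a / 2 : ℂ) * (∫ y in Ioi γ,
          (Complex.exp (Complex.I * ξ * y) - 1) * ((Real.exp (-c * y) / y : ℝ) : ℂ))
        + (a / 2) * ∫ y in Ioi γ,
          (Complex.exp (-(Complex.I * ξ * y)) - 1) * ((Real.exp (-c * y) / y : ℝ) : ℂ)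
        = (a / 2 : ℂ) * ((∫ y in Ioi γ,
            (Complex.exp (Complex.I * ξ * y) - 1) * ((Real.exp (-c * y) / y : ℝ) : ℂ))
          + ∫ y in Ioi γ,
            (Complex.exp (-(Complex.I * ξ * y)) - 1) * ((Real.exp (-c * y) / y : ℝ) : ℂ)) := by
          ring
      _ = (a / 2 : ℂ) * ∫ y in Ioi γ,
            ((Complex.exp (Complex.I * ξ * y) - 1) * ((Real.exp (-c * y) / y : ℝ) : ℂ)
            + (Complex.exp (-(Complex.I * ξ * y)) - 1) * ((Real.exp (-c * y) / y : ℝ) : ℂ)) := by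
          rw [integral_add hA hB]
      _ = (a / 2 : ℂ) * ∫ y in Ioi γ, ((f y : ℝ) : ℂ) := by
          congr 1
          exact setIntegral_congr_fun measurableSet_Ioi fun y _ => hkey y
      _ = (a / 2 : ℂ) * ((∫ y in Ioi γ, f y : ℝ) : ℂ) := by
          congr 1
          exact integral_ofReal (𝕜 := ℂ)
  exact hEq.symm
end

section
/- For a > 0, b > 0 and ξ ∈ ℝ: ∫₀^∞ (cos(ξy) - 1)·(e^{-by}/y) dy = -(1/2)·ln(1 + ξ²/b²). -/
open Real MeasureTheory Filter Set Topology

lemma abs_cos_sub_one_le (x : ℝ) : |Real.cos x - 1| ≤ |x| := by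
  have h : Real.cos x - 1 = -(2 * Real.sin (x / 2) ^ 2) := by
    have h1 := Real.cos_two_mul (x / 2)
    have h2 := Real.sin_sq_add_cos_sq (x / 2)
    rw [show 2 * (x / 2) = x by ring] at h1
    nlinarith
  rw [h, abs_neg]
  have h1 : |Real.sin (x / 2)| ≤ 1 := Real.abs_sin_le_one _
  have h2 : |Real.sin (x / 2)| ≤ |x / 2| := Real.abs_sin_le_abs
  have h3 : 0 ≤ |Real.sin (x / 2)| := abs_nonneg _
  calc |2 * Real.sin (x / 2) ^ 2| = 2 * (|Real.sin (x / 2)| * |Real.sin (x / 2)|) := by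
        rw [abs_mul, sq, abs_mul]; simp [abs_of_nonneg]
    _ ≤ 2 * (|x / 2| * 1) := by
        apply mul_le_mul_of_nonneg_left _ (by norm_num)
        exact mul_le_mul h2 h1 h3 (abs_nonneg _)
    _ = |x| := by rw [abs_div]; simp; ring

lemma exp_sin_integral (b ξ : ℝ) (hb : 0 < b) :
    ∫ y in Set.Ioi (0 : ℝ), Real.sin (ξ * y) * Real.exp (-b * y) = ξ / (b ^ 2 + ξ ^ 2) := by
  have hden : (0 : ℝ) < b ^ 2 + ξ ^ 2 := by positivity
  set A : ℝ → ℝ := fun y =>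
    -(Real.exp (-b * y) * (b * Real.sin (ξ * y) + ξ * Real.cos (ξ * y))) / (b ^ 2 + ξ ^ 2)
    with hA
  have hderiv : ∀ y ∈ Set.Ici (0:ℝ), HasDerivAt A (Real.sin (ξ * y) * Real.exp (-b * y)) y := by
    intro y _
    have hE : HasDerivAt (fun y : ℝ => Real.exp (-b * y)) (Real.exp (-b * y) * (-b)) y := by
      simpa using ((hasDerivAt_id y).const_mul (-b)).exp
    have hS : HasDerivAt (fun y : ℝ => Real.sin (ξ * y)) (Real.cos (ξ * y) * ξ) y := by
      simpa using ((hasDerivAt_id y).const_mul ξ).sin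
    have hC : HasDerivAt (fun y : ℝ => Real.cos (ξ * y)) (-Real.sin (ξ * y) * ξ) y := by
      simpa using ((hasDerivAt_id y).const_mul ξ).cos
    have h1 : HasDerivAt (fun y : ℝ => b * Real.sin (ξ * y) + ξ * Real.cos (ξ * y))
        (b * (Real.cos (ξ * y) * ξ) + ξ * (-Real.sin (ξ * y) * ξ)) y :=
      (hS.const_mul b).add (hC.const_mul ξ)
    have h2 := ((hE.mul h1).neg).div_const (b ^ 2 + ξ ^ 2)
    refine h2.congr_deriv ?_
    field_simp [hden.ne']
    ring
  have hint : IntegrableOn (fun y => Real.sin (ξ * y) * Real.exp (-b * y)) (Set.Ioi (0:ℝ)) := by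
    apply (exp_neg_integrableOn_Ioi 0 hb).mono' 
    · exact ((Real.continuous_sin.comp (continuous_const.mul continuous_id)).mul
        (Real.continuous_exp.comp (continuous_const.mul continuous_id))).aestronglyMeasurable
    · filter_upwards with y
      rw [norm_mul]
      have : ‖Real.sin (ξ * y)‖ ≤ 1 := by
        rw [Real.norm_eq_abs]; exact Real.abs_sin_le_one _
      calc ‖Real.sin (ξ * y)‖ * ‖Real.exp (-b * y)‖ ≤ 1 * ‖Real.exp (-b * y)‖ :=
            mul_le_mul_of_nonneg_right this (norm_nonneg _)
        _ = Real.exp (-b * y) := by rw [one_mul, Real.norm_eq_abs, abs_of_pos (Real.exp_pos _)]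
  have htend : Tendsto A atTop (𝓝 0) := by
    apply squeeze_zero_norm (a := fun y => (b + |ξ|) * Real.exp (-b * y) / (b ^ 2 + ξ ^ 2))
    · intro y
      have hS : |b * Real.sin (ξ * y) + ξ * Real.cos (ξ * y)| ≤ b + |ξ| := by
        calc |b * Real.sin (ξ * y) + ξ * Real.cos (ξ * y)|
            ≤ |b * Real.sin (ξ * y)| + |ξ * Real.cos (ξ * y)| := abs_add_le _ _
          _ ≤ b + |ξ| := by
              rw [abs_mul, abs_mul, abs_of_pos hb]
              have h1 := Real.abs_sin_le_one (ξ * y)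
              have h2 := Real.abs_cos_le_one (ξ * y)
              nlinarith [abs_nonneg ξ, abs_nonneg (Real.sin (ξ*y)), abs_nonneg (Real.cos (ξ*y))]
      rw [hA]
      rw [Real.norm_eq_abs, abs_div, abs_neg, abs_mul, abs_of_pos hden,
        abs_of_pos (Real.exp_pos _), mul_comm (Real.exp (-b * y))]
      gcongr
    · have h0 : Tendsto (fun y : ℝ => Real.exp (-b * y)) atTop (𝓝 0) := by
        apply Real.tendsto_exp_atBot.comp
        exact Tendsto.const_mul_atTop_of_neg (neg_neg_iff_pos.mpr hb) tendsto_id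
      simpa using (h0.const_mul (b + |ξ|)).div_const (b ^ 2 + ξ ^ 2)
  have := integral_Ioi_of_hasDerivAt_of_tendsto' hderiv hint htend
  rw [this, hA]
  simp
  field_simp

lemma cos_integrand_aesm (b x : ℝ) :
    AEStronglyMeasurable (fun y => (Real.cos (x * y) - 1) * (Real.exp (-b * y) / y))
      (volume.restrict (Set.Ioi (0:ℝ))) := by
  apply ContinuousOn.aestronglyMeasurable _ measurableSet_Ioi
  apply ContinuousOn.mul
  · exact ((Real.continuous_cos.comp (continuous_const.mul continuous_id)).sub
      continuous_const).continuousOn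
  · exact (Real.continuous_exp.comp (continuous_const.mul continuous_id)).continuousOn.div
      continuousOn_id (fun y hy => ne_of_gt hy)

lemma cos_integrand_integrable (b x : ℝ) (hb : 0 < b) :
    IntegrableOn (fun y => (Real.cos (x * y) - 1) * (Real.exp (-b * y) / y))
      (Set.Ioi (0:ℝ)) := by
  apply Integrable.mono' ((exp_neg_integrableOn_Ioi 0 hb).const_mul |x|) (cos_integrand_aesm b x)
  rw [ae_restrict_iff' measurableSet_Ioi]
  filter_upwards with y hy
  rw [Set.mem_Ioi] at hy
  rw [Real.norm_eq_abs, abs_mul, abs_div, abs_of_pos (Real.exp_pos _), abs_of_pos hy]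
  have h1 : |Real.cos (x * y) - 1| ≤ |x| * y := by
    have := abs_cos_sub_one_le (x * y)
    rwa [abs_mul, abs_of_pos hy] at this
  calc |Real.cos (x * y) - 1| * (Real.exp (-b * y) / y)
      ≤ |x| * y * (Real.exp (-b * y) / y) := mul_le_mul_of_nonneg_right h1 (by positivity)
    _ = |x| * Real.exp (-b * y) := by
        rw [mul_assoc, mul_div_cancel₀ _ hy.ne']

set_option maxHeartbeats 1000000 in
lemma cos_levy_deriv (b : ℝ) (hb : 0 < b) (x₀ : ℝ) :
    HasDerivAt (fun x : ℝ =>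
        ∫ y in Set.Ioi (0 : ℝ), (Real.cos (x * y) - 1) * (Real.exp (-b * y) / y))
      (-(x₀ / (b ^ 2 + x₀ ^ 2))) x₀ := by
  have hmeas : ∀ᶠ x in 𝓝 x₀, AEStronglyMeasurable
      (fun y => (Real.cos (x * y) - 1) * (Real.exp (-b * y) / y))
      (volume.restrict (Set.Ioi (0:ℝ))) :=
    Eventually.of_forall fun x => cos_integrand_aesm b x
  have hF'meas : AEStronglyMeasurable
      (fun y : ℝ => -(Real.sin (x₀ * y) * Real.exp (-b * y)))
      (volume.restrict (Set.Ioi (0:ℝ))) :=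
    (((Real.continuous_sin.comp (continuous_const.mul continuous_id)).mul
      (Real.continuous_exp.comp (continuous_const.mul continuous_id))).neg).aestronglyMeasurable
  have hbound : ∀ᵐ y ∂(volume.restrict (Set.Ioi (0:ℝ))),
      ∀ x ∈ Metric.ball x₀ 1, ‖-(Real.sin (x * y) * Real.exp (-b * y))‖ ≤ Real.exp (-b * y) := by
    filter_upwards with y
    intro x _
    rw [norm_neg, norm_mul, Real.norm_eq_abs, Real.norm_eq_abs,
      abs_of_pos (Real.exp_pos _)]
    have h1 := Real.abs_sin_le_one (x * y)
    calc |Real.sin (x * y)| * Real.exp (-b * y) ≤ 1 * Real.exp (-b * y) :=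
          mul_le_mul_of_nonneg_right h1 (Real.exp_pos _).le
      _ = Real.exp (-b * y) := one_mul _
  have hdiff : ∀ᵐ y ∂(volume.restrict (Set.Ioi (0:ℝ))), ∀ x ∈ Metric.ball x₀ 1,
      HasDerivAt (fun x : ℝ => (Real.cos (x * y) - 1) * (Real.exp (-b * y) / y))
        (-(Real.sin (x * y) * Real.exp (-b * y))) x := by
    rw [ae_restrict_iff' measurableSet_Ioi]
    filter_upwards with y hy
    intro x _
    have h1 : HasDerivAt (fun x : ℝ => Real.cos (x * y)) (-Real.sin (x * y) * y) x := by
      simpa using ((hasDerivAt_id x).mul_const y).cos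
    have h2 := (h1.sub_const 1).mul_const (Real.exp (-b * y) / y)
    refine h2.congr_deriv ?_
    rw [Set.mem_Ioi] at hy
    field_simp [hy.ne']
  have H := hasDerivAt_integral_of_dominated_loc_of_deriv_le (Metric.ball_mem_nhds x₀ zero_lt_one) hmeas
    (cos_integrand_integrable b x₀ hb) hF'meas hbound (exp_neg_integrableOn_Ioi 0 hb) hdiff
  have h2 := H.2
  rwa [MeasureTheory.integral_neg, exp_sin_integral b x₀ hb] at h2

theorem cos_levy_exponent (a b ξ : ℝ) (ha : 0 < a) (hb : 0 < b) :
    ∫ y in Set.Ioi (0 : ℝ), (Real.cos (ξ * y) - 1) * (Real.exp (-b * y) / y)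
      = -(1 / 2) * Real.log (1 + ξ ^ 2 / b ^ 2) := by
  have hGd : ∀ x : ℝ, HasDerivAt (fun x : ℝ => -(1 / 2) * Real.log (1 + x ^ 2 / b ^ 2))
      (-(x / (b ^ 2 + x ^ 2))) x := by
    intro x
    have hu : (0:ℝ) < 1 + x ^ 2 / b ^ 2 := by positivity
    have h1 : HasDerivAt (fun x : ℝ => 1 + x ^ 2 / b ^ 2) (2 * x / b ^ 2) x := by
      simpa using ((hasDerivAt_pow 2 x).div_const (b ^ 2)).const_add 1
    have h2 := (h1.log (ne_of_gt hu)).const_mul (-(1 / 2 : ℝ))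
    refine h2.congr_deriv ?_
    field_simp [hu.ne']
  have hd : ∀ x : ℝ, HasDerivAt (fun x : ℝ =>
      (∫ y in Set.Ioi (0 : ℝ), (Real.cos (x * y) - 1) * (Real.exp (-b * y) / y))
        - -(1 / 2) * Real.log (1 + x ^ 2 / b ^ 2)) 0 x := by
    intro x
    exact ((cos_levy_deriv b hb x).sub (hGd x)).congr_deriv (by ring)
  have hconst := is_const_of_deriv_eq_zero (𝕜 := ℝ)
    (f := fun x : ℝ =>
      (∫ y in Set.Ioi (0 : ℝ), (Real.cos (x * y) - 1) * (Real.exp (-b * y) / y))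
        - -(1 / 2) * Real.log (1 + x ^ 2 / b ^ 2))
    (fun x => (hd x).differentiableAt) (fun x => (hd x).deriv) ξ 0
  have hF0 : (∫ y in Set.Ioi (0 : ℝ), (Real.cos ((0:ℝ) * y) - 1) * (Real.exp (-b * y) / y)) = 0 := by
    simp
  have hG0 : -(1 / 2 : ℝ) * Real.log (1 + (0:ℝ) ^ 2 / b ^ 2) = 0 := by norm_num
  rw [hF0, hG0] at hconst
  linarith [hconst]
end
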